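/- Every acyclic formula of set theory is stratified. -/
import Mathlib


/-- Alphabet of the usual syntax of set theory. -/
inductive Alph : Type
  | lb | rb | imp | all | deq | mem | w | prime | bot
deriving DecidableEq

/-- Well-formed formulae of set theory; variables are naturals (number of primes). -/
inductive Fm : Type
  | bot : Fm
  | eq : ℕ → ℕ → Fm
  | mem : ℕ → ℕ → Fm
  | imp : Fm → Fm → Fm
  | all : ℕ → Fm → Fm
deriving DecidableEq

/-- The string `w'^n` for the variable with `n` primes. -/
def varStr (n : ℕ) : List Alph := Alph.w :: List.replicate n Alph.prime

/-- The string of symbols of a formula. -/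
def Fm.str : Fm → List Alph
  | .bot => [Alph.bot]
  | .eq x y => varStr x ++ [Alph.deq] ++ varStr y
  | .mem x y => varStr x ++ [Alph.mem] ++ varStr y
  | .imp φ ψ => [Alph.lb] ++ φ.str ++ [Alph.imp] ++ ψ.str ++ [Alph.rb]
  | .all x φ => [Alph.lb, Alph.all] ++ varStr x ++ [Alph.rb] ++ φ.str

/-- Pairs `(x, y)` such that `x ∈ y` occurs as an atomic subformula. -/
def Fm.memPairs : Fm → Finset (ℕ × ℕ)
  | .bot => ∅
  | .eq _ _ => ∅
  | .mem x y => {(x, y)}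
  | .imp φ ψ => φ.memPairs ∪ ψ.memPairs
  | .all _ φ => φ.memPairs

/-- Pairs `(x, y)` such that `x ≐ y` occurs as an atomic subformula. -/
def Fm.eqPairs : Fm → Finset (ℕ × ℕ)
  | .bot => ∅
  | .eq x y => {(x, y)}
  | .mem _ _ => ∅
  | .imp φ ψ => φ.eqPairs ∪ ψ.eqPairs
  | .all _ φ => φ.eqPairs

/-- A formula is stratified if some integer assignment to variables satisfies
`σ x = σ y - 1` for subformulae `x ∈ y` and `σ x = σ y` for subformulae `x ≐ y`. -/
def Fm.Stratified (φ : Fm) : Prop :=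
  ∃ σ : ℕ → ℤ, (∀ p ∈ φ.memPairs, σ p.1 = σ p.2 - 1) ∧ (∀ p ∈ φ.eqPairs, σ p.1 = σ p.2)

/-- Tagged atomic subformulae: `(false, x, y)` for `x ≐ y` and `(true, x, y)` for `x ∈ y`. -/
def Fm.atoms : Fm → Finset (Bool × ℕ × ℕ)
  | .bot => ∅
  | .eq x y => {(false, x, y)}
  | .mem x y => {(true, x, y)}
  | .imp φ ψ => φ.atoms ∪ ψ.atoms
  | .all _ φ => φ.atoms

/-- The number of quantifiers `[∀x]` over the variable `x` occurring in a formula. -/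
def Fm.quantCount (x : ℕ) : Fm → ℕ
  | .bot => 0
  | .eq _ _ => 0
  | .mem _ _ => 0
  | .imp φ ψ => Fm.quantCount x φ + Fm.quantCount x ψ
  | .all y φ => (if y = x then 1 else 0) + Fm.quantCount x φ

/-- The variable `x` has a free occurrence in the formula. -/
def Fm.FreeIn (x : ℕ) : Fm → Prop
  | .bot => False
  | .eq a b => a = x ∨ b = x
  | .mem a b => a = x ∨ b = x
  | .imp φ ψ => Fm.FreeIn x φ ∨ Fm.FreeIn x ψ
  | .all y φ => y ≠ x ∧ Fm.FreeIn x φ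

/-- Variables appearing in a formula (including binders). -/
def Fm.vars : Fm → Finset ℕ
  | .bot => ∅
  | .eq x y => {x, y}
  | .mem x y => {x, y}
  | .imp φ ψ => φ.vars ∪ ψ.vars
  | .all x φ => insert x φ.vars

/-- A formula is acyclic if every variable is either always free or always bound by the
same (unique) quantifier, and there is no cycle of distinct atomic subformulae linking a
sequence of variables `x_0, …, x_n` with `x_0 = x_n`, `n ≥ 1`. -/
def Fm.Acyclic (φ : Fm) : Prop :=
  (∀ x ∈ φ.vars, Fm.quantCount x φ = 0 ∨ (Fm.quantCount x φ = 1 ∧ ¬ Fm.FreeIn x φ)) ∧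
  ¬ ∃ (n : ℕ) (x : Fin (n + 1) → ℕ) (α : Fin n → Bool × ℕ × ℕ),
      1 ≤ n ∧ x 0 = x (Fin.last n) ∧ Function.Injective α ∧
      ∀ i : Fin n, α i ∈ φ.atoms ∧
        ((α i).2 = (x i.castSucc, x i.succ) ∨ (α i).2 = (x i.succ, x i.castSucc))

section Aux

/-- A single edge step in the graph of atoms. -/
def Step (A : Finset (Bool × ℕ × ℕ)) (b : Bool × ℕ × ℕ) (u v : ℕ) : Prop :=
  b ∈ A ∧ (b.2 = (u, v) ∨ b.2 = (v, u))

/-- A walk of length `n` in the graph of atoms, with vertices `v` and edges `e`. -/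
def WalkFn (A : Finset (Bool × ℕ × ℕ)) (n : ℕ) (v : ℕ → ℕ) (e : ℕ → Bool × ℕ × ℕ) : Prop :=
  ∀ i < n, Step A (e i) (v i) (v (i + 1))

/-- No cycle of distinct edges in the atom set `A`. -/
def NC (A : Finset (Bool × ℕ × ℕ)) : Prop :=
  ¬ ∃ (n : ℕ) (x : Fin (n + 1) → ℕ) (α : Fin n → Bool × ℕ × ℕ),
      1 ≤ n ∧ x 0 = x (Fin.last n) ∧ Function.Injective α ∧
      ∀ i : Fin n, α i ∈ A ∧
        ((α i).2 = (x i.castSucc, x i.succ) ∨ (α i).2 = (x i.succ, x i.castSucc))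

lemma NC.mono {A B : Finset (Bool × ℕ × ℕ)} (h : NC B) (hAB : A ⊆ B) : NC A := by
  intro ⟨n, x, α, h1, h2, h3, h4⟩
  exact h ⟨n, x, α, h1, h2, h3, fun i => ⟨hAB (h4 i).1, (h4 i).2⟩⟩

/-- Splicing out a repeated vertex from a walk. -/
lemma walk_splice {A : Finset (Bool × ℕ × ℕ)} {n : ℕ} {v : ℕ → ℕ} {e : ℕ → Bool × ℕ × ℕ}
    (hw : WalkFn A n v e) {p d : ℕ} (hd : 1 ≤ d) (hpd : p + d ≤ n)
    (hv : v p = v (p + d)) :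
    ∃ v' e', v' 0 = v 0 ∧ v' (n - d) = v n ∧ WalkFn A (n - d) v' e' := by
  refine ⟨fun k => if k ≤ p then v k else v (k + d),
          fun k => if k < p then e k else e (k + d), by simp, ?_, ?_⟩
  · by_cases h : n - d ≤ p
    · have h1 : n - d = p := by omega
      have h2 : p + d = n := by omega
      simp only [h1, if_pos le_rfl, hv, h2]
    · simp only [if_neg h]
      congr 1
      omega
  · intro k hk
    by_cases hkp : k < p
    · have h1 : k ≤ p := le_of_lt hkp
      have h2 : k + 1 ≤ p := hkp
      simp only [if_pos h1, if_pos h2, if_pos hkp]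
      exact hw k (by omega)
    · push_neg at hkp
      have h1 : ¬ (k + 1 ≤ p) := by omega
      simp only [if_neg hkp.not_gt, if_neg h1]
      have hstep := hw (k + d) (by omega)
      have harith : k + 1 + d = k + d + 1 := by omega
      rw [harith]
      by_cases hkp2 : k ≤ p
      · have : k = p := le_antisymm hkp2 hkp
        subst this
        simp only [if_pos le_rfl]
        rw [hv]
        exact hstep
      · simp only [if_neg hkp2]
        exact hstep

/-- Every walk can be replaced by one (with the same endpoints) whose edges are distinct. -/
lemma walk_nodup {A : Finset (Bool × ℕ × ℕ)} :
    ∀ n, ∀ v e, WalkFn A n v e →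
      ∃ m v' e', WalkFn A m v' e' ∧ v' 0 = v 0 ∧ v' m = v n ∧
        ∀ i j, i < m → j < m → e' i = e' j → i = j := by
  intro n
  induction n using Nat.strong_induction_on with
  | _ n ih =>
    intro v e hw
    by_cases hinj : ∀ i j, i < n → j < n → e i = e j → i = j
    · exact ⟨n, v, e, hw, rfl, rfl, hinj⟩
    · push_neg at hinj
      obtain ⟨i, j, hi, hj, heq, hne⟩ := hinj
      -- WLOG i < j
      have key : ∀ i j, i < j → j < n → e i = e j →
          ∃ p q, p < q ∧ q ≤ n ∧ v p = v q := by
        intro i j hij hj heq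
        have hsi := hw i (by omega)
        have hsj := hw j hj
        rw [heq] at hsi
        rcases hsi.2 with h1 | h1 <;> rcases hsj.2 with h2 | h2 <;>
          rw [h1] at h2
        · exact ⟨i + 1, j + 1, by omega, by omega, by
            have := (Prod.mk.injEq _ _ _ _).mp h2
            exact this.2⟩
        · exact ⟨i, j + 1, by omega, by omega, by
            have := (Prod.mk.injEq _ _ _ _).mp h2
            exact this.1⟩
        · exact ⟨i, j + 1, by omega, by omega, by
            have := (Prod.mk.injEq _ _ _ _).mp h2
            exact this.2.symm ▸ this.2⟩
        · exact ⟨i + 1, j + 1, by omega, by omega, by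
            have := (Prod.mk.injEq _ _ _ _).mp h2
            exact this.1⟩
      have hpq : ∃ p q, p < q ∧ q ≤ n ∧ v p = v q := by
        rcases lt_trichotomy i j with h | h | h
        · exact key i j h hj heq
        · exact absurd h hne
        · exact key j i h hi heq.symm
      obtain ⟨p, q, hpq1, hpq2, hpq3⟩ := hpq
      have hd : 1 ≤ q - p := by omega
      have hv' : v p = v (p + (q - p)) := by
        have : p + (q - p) = q := by omega
        rw [this]; exact hpq3
      obtain ⟨v', e', h0, hend, hw'⟩ := walk_splice hw hd (by omega) hv'
      obtain ⟨m, v'', e'', hw'', h0', hend', hinj'⟩ :=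
        ih (n - (q - p)) (by omega) v' e' hw'
      exact ⟨m, v'', e'', hw'', h0'.trans h0, hend'.trans hend, hinj'⟩

/-- Extract a walk from reflexive-transitive closure of adjacency. -/
lemma walk_of_rtg {A : Finset (Bool × ℕ × ℕ)} {u w : ℕ}
    (h : Relation.ReflTransGen (fun a b => ∃ c, Step A c a b) u w) :
    ∃ n v e, v 0 = u ∧ v n = w ∧ WalkFn A n v e := by
  induction h with
  | refl => exact ⟨0, fun _ => u, fun _ => (false, 0, 0), rfl, rfl, fun i hi => by omega⟩
  | tail _ hbc ih =>
    rename_i b c hrtg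
    obtain ⟨n, v, e, h0, hn, hw⟩ := ih
    obtain ⟨ce, hce⟩ := hbc
    refine ⟨n + 1, fun k => if k = n + 1 then c else v k, fun k => if k = n then ce else e k,
      ?_, ?_, ?_⟩
    · simp only [if_neg (by omega : (0 : ℕ) ≠ n + 1)]; exact h0
    · simp
    · intro i hi
      by_cases hin : i = n
      · subst hin
        simp only [if_pos rfl, if_neg (by omega : i ≠ i + 1)]
        rw [hn]
        exact hce
      · have h1 : i ≠ n + 1 := by omega
        have h2 : i + 1 ≠ n + 1 := by omega
        simp only [if_neg hin, if_neg h1, if_neg h2]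
        exact hw i (by omega)

/-- If `A` has no cycle and `a = (t,x,y) ∈ A`, then `x ≠ y` and `y` cannot reach `x`
in `A.erase a`. -/
lemma no_reach {A : Finset (Bool × ℕ × ℕ)} (hnc : NC A) {t : Bool} {x y : ℕ}
    (ha : (t, x, y) ∈ A) :
    x ≠ y ∧ ¬ Relation.ReflTransGen (fun a b => ∃ c, Step (A.erase (t, x, y)) c a b) y x := by
  constructor
  · intro hxy
    subst hxy
    apply hnc
    refine ⟨1, fun _ => x, fun _ => (t, x, x), le_refl 1, rfl, fun i j _ => Subsingleton.elim i j,
      fun i => ⟨ha, Or.inl rfl⟩⟩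
  · intro hreach
    obtain ⟨n, v, e, h0, hn, hw⟩ := walk_of_rtg hreach
    obtain ⟨m, v', e', hw', h0', hm', hinj⟩ := walk_nodup n v e hw
    rw [h0] at h0'
    rw [hn] at hm'
    apply hnc
    -- cycle: x, v' 0 = y, v' 1, ..., v' m = x   of length m + 1
    refine ⟨m + 1,
      fun i => if i.val = 0 then x else v' (i.val - 1),
      fun i => if i.val = 0 then (t, x, y) else e' (i.val - 1),
      by omega, ?_, ?_, ?_⟩
    · simp [hm']
    · intro i j hij
      by_cases hi0 : i.val = 0 <;> by_cases hj0 : j.val = 0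
      · exact Fin.ext (hi0.trans hj0.symm)
      · exfalso
        simp only [if_pos hi0, if_neg hj0] at hij
        have : e' (j.val - 1) ∈ A.erase (t, x, y) := (hw' (j.val - 1) (by omega)).1
        rw [← hij] at this
        exact (Finset.mem_erase.mp this).1 rfl
      · exfalso
        simp only [if_pos hj0, if_neg hi0] at hij
        have : e' (i.val - 1) ∈ A.erase (t, x, y) := (hw' (i.val - 1) (by omega)).1
        rw [hij] at this
        exact (Finset.mem_erase.mp this).1 rfl
      · simp only [if_neg hi0, if_neg hj0] at hij
        have := hinj (i.val - 1) (j.val - 1) (by omega) (by omega) hij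
        exact Fin.ext (by omega)
    · intro i
      by_cases hi0 : i.val = 0
      · constructor
        · simp only [if_pos hi0]; exact ha
        · left
          have hc : i.castSucc.val = 0 := hi0
          have hs : i.succ.val = 1 := by simp [Fin.val_succ, hi0]
          simp only [if_pos hi0, hc, hs]
          simp [h0']
      · have hstep := hw' (i.val - 1) (by omega)
        constructor
        · simp only [if_neg hi0]
          exact Finset.mem_of_mem_erase hstep.1
        · have hc : i.castSucc.val = i.val := rfl
          have hs : i.succ.val = i.val + 1 := rfl
          simp only [if_neg hi0, hc, hs, if_neg (by omega : i.val + 1 ≠ 0)]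
          have h1 : i.val + 1 - 1 = i.val - 1 + 1 := by omega
          rw [h1]
          exact hstep.2

/-- Main lemma: a cycle-free atom set admits a stratification. -/
lemma nc_stratified : ∀ N (A : Finset (Bool × ℕ × ℕ)), A.card ≤ N → NC A →
    ∃ σ : ℕ → ℤ, ∀ b ∈ A, σ b.2.1 = σ b.2.2 - (if b.1 then 1 else 0) := by
  intro N
  induction N with
  | zero =>
    intro A hcard _
    have : A = ∅ := Finset.card_eq_zero.mp (le_antisymm hcard (Nat.zero_le _))
    exact ⟨fun _ => 0, fun b hb => absurd hb (by simp [this])⟩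
  | succ N ih =>
    intro A hcard hnc
    rcases Finset.eq_empty_or_nonempty A with rfl | ⟨a, ha⟩
    · exact ⟨fun _ => 0, fun b hb => absurd hb (by simp)⟩
    · obtain ⟨t, x, y⟩ := a
      set A' := A.erase (t, x, y) with hA'
      have hcard' : A'.card ≤ N := by
        rw [hA', Finset.card_erase_of_mem ha]
        omega
      obtain ⟨σ, hσ⟩ := ih A' hcard' (hnc.mono (Finset.erase_subset _ _))
      obtain ⟨hxy, hnr⟩ := no_reach hnc ha
      classical
      set C : ℕ → Prop := fun v => Relation.ReflTransGen (fun a b => ∃ c, Step A' c a b) y v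
        with hC
      set wt : ℤ := if t then 1 else 0 with hwt
      set d : ℤ := σ x - σ y + wt with hd
      refine ⟨fun v => σ v + if C v then d else 0, ?_⟩
      have hCsym : ∀ u w, (∃ c, Step A' c u w) → (C u ↔ C w) := by
        intro u w ⟨c, hc⟩
        constructor
        · intro h; exact h.tail ⟨c, hc⟩
        · intro h; exact h.tail ⟨c, hc.1, hc.2.symm⟩
      intro b hb
      rcases em (b = (t, x, y)) with rfl | hbne
      · have hCy : C y := Relation.ReflTransGen.refl
        have hCx : ¬ C x := hnr
        simp only [if_pos hCy, if_neg hCx, hd, hwt]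
        ring
      · have hb' : b ∈ A' := Finset.mem_erase.mpr ⟨hbne, hb⟩
        have hstep : ∃ c, Step A' c b.2.1 b.2.2 := ⟨b, hb', Or.inl rfl⟩
        have hCiff := hCsym _ _ hstep
        have := hσ b hb'
        by_cases hCb : C b.2.1
        · simp only [if_pos hCb, if_pos (hCiff.mp hCb)]
          omega
        · simp only [if_neg hCb, if_neg (fun h => hCb (hCiff.mpr h))]
          omega

lemma mem_memPairs_iff (φ : Fm) (p : ℕ × ℕ) : p ∈ φ.memPairs ↔ (true, p) ∈ φ.atoms := by
  induction φ with
  | bot => simp [Fm.memPairs, Fm.atoms]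
  | eq a b => simp [Fm.memPairs, Fm.atoms]
  | mem a b => simp [Fm.memPairs, Fm.atoms, Prod.ext_iff]
  | imp φ ψ ihφ ihψ => simp [Fm.memPairs, Fm.atoms, ihφ, ihψ]
  | all x φ ihφ => simpa [Fm.memPairs, Fm.atoms] using ihφ

lemma mem_eqPairs_iff (φ : Fm) (p : ℕ × ℕ) : p ∈ φ.eqPairs ↔ (false, p) ∈ φ.atoms := by
  induction φ with
  | bot => simp [Fm.eqPairs, Fm.atoms]
  | eq a b => simp [Fm.eqPairs, Fm.atoms, Prod.ext_iff]
  | mem a b => simp [Fm.eqPairs, Fm.atoms]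
  | imp φ ψ ihφ ihψ => simp [Fm.eqPairs, Fm.atoms, ihφ, ihψ]
  | all x φ ihφ => simpa [Fm.eqPairs, Fm.atoms] using ihφ

end Aux

/-- Every acyclic formula of set theory is stratified. -/
theorem acyclic_stratified (φ : Fm) (h : φ.Acyclic) : φ.Stratified := by
  obtain ⟨σ, hσ⟩ := nc_stratified φ.atoms.card φ.atoms le_rfl h.2
  refine ⟨σ, ?_, ?_⟩
  · intro p hp
    have := hσ (true, p) ((mem_memPairs_iff φ p).mp hp)
    simpa using this
  · intro p hp
    have := hσ (false, p) ((mem_eqPairs_iff φ p).mp hp)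
    simpa using this
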